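/- Let n be a positive integer, x_1, …, x_n ≥ 0, and fix i ≤ n. Let m_i be the lower median of x_1, …, x_i and a_i = (x_1 + ⋯ + x_i)/i. Let y_1^{(i)} ≥ ⋯ ≥ y_i^{(i)} be the decreasing rearrangement of x_1, …, x_i. Then |m_i − a_i| ≤ (y_1^{(i)} + y_2^{(i)} + ⋯ + y_{⌊i/2⌋}^{(i)})/i. -/

import Mathlib

open MeasureTheory Set Filter

noncomputable def sortAsc (l : List ℝ) : List ℝ := l.mergeSort (· ≤ ·)
noncomputable def sortDesc (l : List ℝ) : List ℝ := (sortAsc l).reverse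
noncomputable def listLowerMedian (l : List ℝ) : ℝ := (sortAsc l).getD ((l.length - 1) / 2) 0
def seg (x : ℕ → ℝ) (i : ℕ) : List ℝ := (List.range i).map (fun j => x (j+1))

theorem median_hardy_stmt13 (n i : ℕ) (hi : 1 ≤ i) (hin : i ≤ n) (x : ℕ → ℝ)
    (hx : ∀ j, 1 ≤ j → j ≤ n → 0 ≤ x j) :
    |listLowerMedian (seg x i) - (∑ j ∈ Finset.Icc 1 i, x j) / i| ≤
      ((sortDesc (seg x i)).take (i / 2)).sum / i := by
  set l : List ℝ := sortAsc (seg x i) with hldef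
  have hperm : (seg x i).Perm l := (List.mergeSort_perm _ _).symm
  have hsort : l.Pairwise (· ≤ ·) := List.pairwise_mergeSort' _ _
  have hlen : l.length = i := by
    rw [← hperm.length_eq]; simp [seg]
  have hnonneg : ∀ y ∈ l, 0 ≤ y := by
    intro y hy
    have : y ∈ seg x i := hperm.mem_iff.mpr hy
    simp only [seg, List.mem_map, List.mem_range] at this
    obtain ⟨j, hj, rfl⟩ := this
    exact hx (j+1) (by omega) (by omega)
  have hsumseg : (seg x i).sum = ∑ j ∈ Finset.Icc 1 i, x j := by
    have h1 : ∀ N : ℕ, ((List.range N).map (fun j => x (j+1))).sum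
        = ∑ j ∈ Finset.range N, x (j+1) := by
      intro N
      induction N with
      | zero => simp
      | succ N ih =>
        rw [List.range_succ, List.map_append, List.sum_append, Finset.sum_range_succ, ih]
        simp
    rw [seg, h1, ← Finset.Ico_add_one_right_eq_Icc, Finset.sum_Ico_eq_sum_range]
    simp [add_comm]
  have hsum : l.sum = ∑ j ∈ Finset.Icc 1 i, x j := by rw [← hperm.sum_eq, hsumseg]
  obtain ⟨k, idx, hk, hidx⟩ : ∃ k idx, k = i / 2 ∧ idx = (i - 1) / 2 := ⟨_, _, rfl, rfl⟩
  have hidxlt : idx < l.length := by rw [hlen]; omega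
  have hidxk : idx + 1 + k = i := by omega
  have hidxlek : idx ≤ k := by omega
  -- median value
  set m := l[idx] with hm
  have hmed : listLowerMedian (seg x i) = m := by
    have hlen' : (seg x i).length = i := by simp [seg]
    rw [listLowerMedian, ← hldef, hlen', ← hidx, List.getD_eq_getElem l 0 hidxlt]
  have hm0 : 0 ≤ m := hnonneg _ (List.getElem_mem hidxlt)
  -- top-k sum
  have hT : ((sortDesc (seg x i)).take k).sum = (l.drop (idx+1)).sum := by
    have hik : i - k = idx + 1 := by omega
    rw [sortDesc, ← hldef, List.take_reverse, List.sum_reverse, hlen, hik]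
  -- decompose
  have hdecomp : (l.take idx).sum + (m + (l.drop (idx+1)).sum) = l.sum := by
    rw [← List.sum_take_add_sum_drop l idx, List.drop_eq_getElem_cons hidxlt,
      List.sum_cons, hm]
  -- bounds on low part
  have hlow_le : ∀ y ∈ l.take idx, y ≤ m := by
    intro y hy
    rw [List.mem_take_iff_getElem] at hy
    obtain ⟨j, hj, rfl⟩ := hy
    have hj' : j < idx := lt_of_lt_of_le hj (min_le_left _ _)
    exact hsort.rel_get_of_lt (a := ⟨j, by omega⟩) (b := ⟨idx, hidxlt⟩) hj'
  have hlow_ge : 0 ≤ (l.take idx).sum :=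
    List.sum_nonneg (fun y hy => hnonneg y (List.mem_of_mem_take hy))
  have hlow_sum : (l.take idx).sum ≤ idx * m := by
    have := List.sum_le_card_nsmul (l.take idx) m hlow_le
    rwa [List.length_take, hlen, min_eq_left (by omega), nsmul_eq_mul] at this
  -- bounds on high part
  have hhigh_ge : ∀ y ∈ l.drop (idx+1), m ≤ y := by
    intro y hy
    rw [List.mem_drop_iff_getElem] at hy
    obtain ⟨j, hj, rfl⟩ := hy
    exact hsort.rel_get_of_lt (a := ⟨idx, hidxlt⟩) (b := ⟨idx+1+j, by omega⟩)
      (Fin.mk_lt_mk.mpr (by omega))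
  have hhigh_sum : (k : ℝ) * m ≤ (l.drop (idx+1)).sum := by
    have := List.card_nsmul_le_sum (l.drop (idx+1)) m hhigh_ge
    rwa [List.length_drop, hlen, nsmul_eq_mul, show i - (idx+1) = k by omega] at this
  -- arithmetic
  rw [hmed, ← hsum, ← hk, hT]
  have hipos : (0:ℝ) < i := by exact_mod_cast hi
  have hicast : (i:ℝ) = (idx:ℝ) + 1 + (k:ℝ) := by exact_mod_cast congrArg (Nat.cast (R := ℝ)) hidxk.symm
  have hidxcast : (idx:ℝ) ≤ (k:ℝ) := by exact_mod_cast hidxlek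
  have key : |(i:ℝ) * m - l.sum| ≤ (l.drop (idx+1)).sum := by
    rw [abs_le]
    constructor
    · nlinarith [hlow_sum, hhigh_sum, hm0, hlow_ge]
    · nlinarith [hlow_sum, hhigh_sum, hm0, hlow_ge]
  have h1 : m - l.sum / (i:ℝ) = ((i:ℝ) * m - l.sum) / (i:ℝ) := by
    field_simp
  rw [h1, abs_div, abs_of_pos hipos]
  gcongr
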